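/- Let g = ⊕ g(i) be a ℤ-grading of a simple Lie algebra determined by an element h̃ ∈ t with α(h̃) ≥ 0 for all simple roots α, and set Δ(1) = {γ ∈ Δ : γ(h̃) = 1} with Π(1) = Π ∩ Δ(1). Suppose Δ(1) is the set of positive roots with γ(h̃) = 1 (abelian case: γ(h̃) ∈ {−1,0,1} for all roots γ). For w in the set W⁰ of minimal-length coset representatives of W/W(0), the complement I_w = Δ(1) \ N(w) is an upper ideal of the poset Δ(1) (with order induced from the root poset via Π(0)), and w ↦ I_w is a bijection between W⁰ and the set of upper ideals of Δ(1). -/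

import Mathlib

variable {V : Type*} [NormedAddCommGroup V] [InnerProductSpace ℝ V]

/-- Data of a reduced crystallographic root system `Δ` in a Euclidean space, together with a
choice of positive system `Δ⁺` and the corresponding simple roots `Π`. -/
structure RootSystemData (V : Type*) [NormedAddCommGroup V] [InnerProductSpace ℝ V] where
  roots : Finset V
  pos : Finset V
  simples : Finset V
  zero_not_mem : (0 : V) ∉ roots
  neg_mem : ∀ γ ∈ roots, -γ ∈ roots
  reduced : ∀ γ ∈ roots, ∀ c : ℝ, c • γ ∈ roots → c = 1 ∨ c = -1
  crystallographic : ∀ γ ∈ roots, ∀ δ ∈ roots,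
    ∃ n : ℤ, 2 * (inner ℝ γ δ : ℝ) / (inner ℝ δ δ : ℝ) = (n : ℝ)
  reflect_mem : ∀ γ ∈ roots, ∀ δ ∈ roots,
    γ - (2 * (inner ℝ γ δ : ℝ) / (inner ℝ δ δ : ℝ)) • δ ∈ roots
  pos_subset : pos ⊆ roots
  pos_or_neg : ∀ γ ∈ roots, γ ∈ pos ∨ -γ ∈ pos
  pos_neg_disjoint : ∀ γ ∈ pos, -γ ∉ pos
  simples_subset : simples ⊆ pos
  simples_indep : LinearIndependent ℝ (fun α : {x // x ∈ simples} => (α : V))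
  pos_combo : ∀ γ ∈ pos, ∃ c : V → ℕ, γ = ∑ α ∈ simples, (c α : ℝ) • α

/-- Irreducibility: the roots admit no partition into two nonempty mutually orthogonal parts. -/
def RootSystemData.Irreducible (R : RootSystemData V) : Prop :=
  ∀ A B : Set V, A ∪ B = ↑R.roots → Disjoint A B →
    (∀ a ∈ A, ∀ b ∈ B, (inner ℝ a b : ℝ) = 0) → A = ∅ ∨ B = ∅

/-- The reflection in the hyperplane orthogonal to `δ`. -/
noncomputable def reflAt (δ : V) : Function.End V :=
  fun x => x - (2 * (inner ℝ x δ : ℝ) / (inner ℝ δ δ : ℝ)) • δ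

/-- The Weyl group, generated by the reflections in the roots (each reflection is an
involution, so the closure as a monoid of endomorphisms coincides with the generated group). -/
def weylGroup (R : RootSystemData V) : Submonoid (Function.End V) :=
  Submonoid.closure {f | ∃ δ ∈ R.roots, f = reflAt δ}

/-- The inversion set `N(w) = {γ ∈ Δ⁺ : w(γ) < 0}`. -/
def invSet (R : RootSystemData V) (w : Function.End V) : Set V :=
  {γ | γ ∈ R.pos ∧ -(w γ) ∈ R.pos}

/-- The pairing `(γ, θ∨) = 2(γ,θ)/(θ,θ)`. -/
noncomputable def copair (θ γ : V) : ℝ := 2 * (inner ℝ γ θ : ℝ) / (inner ℝ θ θ : ℝ)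

/-- `μ ≤ γ` iff `γ − μ` is a nonnegative integer combination of the simple roots lying in
the subset `Z`. -/
def rootLEon (simples : Finset V) (Z : Set V) (μ γ : V) : Prop :=
  ∃ c : V → ℕ, (∀ α, α ∉ Z → c α = 0) ∧ γ = μ + ∑ α ∈ simples, (c α : ℝ) • α

/-- The weights of `g(1)`: roots with `γ(h̃) = 1` for the defining functional `ℓ`. -/
def gradeOne (R : RootSystemData V) (ℓ : V →ₗ[ℝ] ℝ) : Set V :=
  {γ | γ ∈ R.roots ∧ ℓ γ = 1}

/-- The minimal-length coset representatives
`W⁰ = {w ∈ W : w(α) ∈ Δ⁺ for all α ∈ Δ(0)⁺}`. -/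
def minLengthReps (R : RootSystemData V) (ℓ : V →ₗ[ℝ] ℝ) : Set (Function.End V) :=
  {w | w ∈ weylGroup R ∧ ∀ α, α ∈ R.pos → ℓ α = 0 → w α ∈ R.pos}

/-- The upper ideal `I_w = Δ(1) \ N(w)` attached to `w ∈ W⁰`. -/
def idealOf (R : RootSystemData V) (ℓ : V →ₗ[ℝ] ℝ) (w : Function.End V) : Set V :=
  gradeOne R ℓ \ invSet R w

open RealInnerProductSpace

open scoped Classical

-- ### basics

lemma RootSystemData.root_ne_zero (R : RootSystemData V) {γ : V} (h : γ ∈ R.roots) : γ ≠ 0 :=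
  fun h0 => R.zero_not_mem (h0 ▸ h)

lemma RootSystemData.inner_self_pos (R : RootSystemData V) {γ : V} (h : γ ∈ R.roots) :
    (0:ℝ) < ⟪γ, γ⟫ :=
  lt_of_le_of_ne real_inner_self_nonneg
    (Ne.symm (inner_self_ne_zero.2 (R.root_ne_zero h)))

lemma RootSystemData.inner_self_ne (R : RootSystemData V) {γ : V} (h : γ ∈ R.roots) :
    (⟪γ, γ⟫ : ℝ) ≠ 0 := ne_of_gt (R.inner_self_pos h)

omit [NormedAddCommGroup V] [InnerProductSpace ℝ V] in
lemma end_mul_apply (f g : Function.End V) (x : V) : (f * g) x = f (g x) := rfl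

lemma reflAt_apply (δ x : V) : reflAt δ x = x - (2 * ⟪x, δ⟫ / ⟪δ, δ⟫) • δ := rfl

lemma reflAt_self {δ : V} (hδ : (⟪δ,δ⟫:ℝ) ≠ 0) : reflAt δ δ = -δ := by
  rw [reflAt_apply]
  rw [show (2 * ⟪δ, δ⟫ / ⟪δ, δ⟫ : ℝ) = 2 by field_simp]
  module

lemma reflAt_invol {δ : V} (hδ : (⟪δ,δ⟫:ℝ) ≠ 0) (x : V) : reflAt δ (reflAt δ x) = x := by
  rw [reflAt_apply, reflAt_apply]
  rw [inner_sub_left, real_inner_smul_left]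
  field_simp
  ring_nf
  module

lemma reflAt_neg (δ : V) : reflAt (-δ) = reflAt δ := by
  funext x
  rw [reflAt_apply, reflAt_apply, inner_neg_right, inner_neg_neg, smul_neg]
  module

-- ### height functional

open Classical in
noncomputable def htf (R : RootSystemData V) : V →ₗ[ℝ] ℝ := by
  classical
  have hli : LinearIndepOn ℝ id (↑R.simples : Set V) := R.simples_indep
  exact (Module.Basis.extend hli).constr ℝ
    (fun i => if ((i : V) ∈ R.simples) then (1:ℝ) else 0)

lemma htf_simple (R : RootSystemData V) {α : V} (hα : α ∈ R.simples) : htf R α = 1 := by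
  classical
  unfold htf
  have hli : LinearIndepOn ℝ id (↑R.simples : Set V) := R.simples_indep
  have hmem : α ∈ hli.extend (Set.subset_univ _) :=
    hli.subset_extend (Set.subset_univ _) (by exact_mod_cast hα)
  have : α = (Module.Basis.extend hli) ⟨α, hmem⟩ := by rw [Module.Basis.extend_apply_self]
  rw [this, Module.Basis.constr_basis]
  simp [hα]

lemma htf_pos_nat (R : RootSystemData V) {γ : V} (h : γ ∈ R.pos) :
    ∃ n : ℕ, htf R γ = (n : ℝ) ∧ 1 ≤ n := by
  obtain ⟨c, hc⟩ := R.pos_combo γ h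
  refine ⟨∑ α ∈ R.simples, c α, ?_, ?_⟩
  · rw [hc, map_sum]
    push_cast
    refine Finset.sum_congr rfl fun α hα => ?_
    rw [map_smul, htf_simple R hα, smul_eq_mul, mul_one]
  · by_contra hn
    push_neg at hn
    interval_cases h' : (∑ α ∈ R.simples, c α)
    · have : ∀ α ∈ R.simples, c α = 0 := by
        intro α hα
        exact (Finset.sum_eq_zero_iff.1 h') α hα
      have : γ = 0 := by
        rw [hc]
        refine Finset.sum_eq_zero fun α hα => by rw [this α hα]; simp
      exact R.root_ne_zero (R.pos_subset h) this

lemma htf_pos_ge_one (R : RootSystemData V) {γ : V} (h : γ ∈ R.pos) : 1 ≤ htf R γ := by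
  obtain ⟨n, hn, h1⟩ := htf_pos_nat R h
  rw [hn]; exact_mod_cast h1

lemma mem_pos_iff_htf (R : RootSystemData V) {γ : V} (h : γ ∈ R.roots) :
    γ ∈ R.pos ↔ 0 < htf R γ := by
  constructor
  · intro hp; linarith [htf_pos_ge_one R hp]
  · intro hf
    rcases R.pos_or_neg γ h with hp | hp
    · exact hp
    · have := htf_pos_ge_one R hp
      rw [map_neg] at this
      linarith

lemma neg_htf_of_not_pos (R : RootSystemData V) {γ : V} (h : γ ∈ R.roots) (hn : γ ∉ R.pos) :
    htf R γ ≤ -1 := by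
  rcases R.pos_or_neg γ h with hp | hp
  · exact absurd hp hn
  · have := htf_pos_ge_one R hp
    rw [map_neg] at this; linarith

lemma sum_pos_mem (R : RootSystemData V) {a b : V} (ha : a ∈ R.pos) (hb : b ∈ R.pos)
    (hab : a + b ∈ R.roots) : a + b ∈ R.pos := by
  rw [mem_pos_iff_htf R hab, map_add]
  linarith [htf_pos_ge_one R ha, htf_pos_ge_one R hb]

lemma simple_of_htf_one (R : RootSystemData V) {γ : V} (h : γ ∈ R.pos)
    (h1 : htf R γ = 1) : γ ∈ R.simples := by
  obtain ⟨c, hc⟩ := R.pos_combo γ h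
  have hsum : (∑ α ∈ R.simples, c α : ℝ) = 1 := by
    rw [← h1, hc, map_sum]
    push_cast
    refine (Finset.sum_congr rfl fun α hα => ?_).symm
    rw [map_smul, htf_simple R hα, smul_eq_mul, mul_one]
  have hsumn : ∑ α ∈ R.simples, c α = 1 := by exact_mod_cast hsum
  obtain ⟨β, hβ, hcβ⟩ : ∃ β ∈ R.simples, c β ≠ 0 := by
    by_contra hc0
    push_neg at hc0
    rw [Finset.sum_eq_zero hc0] at hsumn
    exact one_ne_zero hsumn.symm
  classical
  have hcβ1 : c β = 1 := by
    have := Finset.single_le_sum (f := c) (fun i _ => Nat.zero_le _) hβ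
    omega
  have hadd := Finset.add_sum_erase _ c hβ
  have hsm : ∑ α ∈ R.simples.erase β, c α = 0 := by omega
  have hrest : ∀ α ∈ R.simples, α ≠ β → c α = 0 := by
    intro α hα hne
    exact (Finset.sum_eq_zero_iff.1 hsm) α (Finset.mem_erase.2 ⟨hne, hα⟩)
  have hγβ : γ = β := by
    rw [hc, ← Finset.add_sum_erase _ (fun α => ((c α : ℝ) • α)) hβ, hcβ1]
    have : ∑ α ∈ R.simples.erase β, ((c α : ℝ) • α) = 0 := by
      refine Finset.sum_eq_zero fun α hα => ?_
      rcases Finset.mem_erase.1 hα with ⟨hne, hαs⟩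
      rw [hrest α hαs hne]; simp
    rw [this]; simp
  exact hγβ ▸ hβ

lemma htf_ge_two (R : RootSystemData V) {γ : V} (h : γ ∈ R.pos) (hns : γ ∉ R.simples) :
    2 ≤ htf R γ := by
  obtain ⟨n, hn, h1⟩ := htf_pos_nat R h
  rcases Nat.lt_or_ge n 2 with h2 | h2
  · interval_cases n
    · exact absurd (simple_of_htf_one R h (by rw [hn]; norm_num)) hns
  · rw [hn]; exact_mod_cast h2

-- ### coefficient uniqueness

lemma coeff_unique (R : RootSystemData V) (a b : V → ℝ)
    (h : ∑ α ∈ R.simples, a α • α = ∑ α ∈ R.simples, b α • α) :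
    ∀ β ∈ R.simples, a β = b β := by
  classical
  have h0 : ∑ α ∈ R.simples, (a α - b α) • α = 0 := by
    simp only [sub_smul, Finset.sum_sub_distrib, h, sub_self]
  have hsub : ∑ i : {x // x ∈ R.simples}, (a i.1 - b i.1) • (i.1 : V) = 0 := by
    rw [← h0, ← Finset.sum_attach R.simples (fun x => (a x - b x) • x)]
    rfl
  have hall := Fintype.linearIndependent_iff.1 R.simples_indep (fun i => a i.1 - b i.1) hsub
  intro β hβ
  have := hall ⟨β, hβ⟩
  simp only at this
  linarith

-- ### niceness of Weyl group elements

structure IsNice (R : RootSystemData V) (w : Function.End V) : Prop where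
  lin : ∃ L : V →ₗ[ℝ] V, w = ⇑L
  inner_map : ∀ x y : V, ⟪w x, w y⟫ = ⟪x, y⟫
  root_map : ∀ γ ∈ R.roots, w γ ∈ R.roots
  inv : ∃ v, v ∈ weylGroup R ∧ (∀ x, v (w x) = x) ∧ (∀ x, w (v x) = x)

lemma reflAt_mem_weyl (R : RootSystemData V) {δ : V} (hδ : δ ∈ R.roots) :
    reflAt δ ∈ weylGroup R :=
  Submonoid.subset_closure ⟨δ, hδ, rfl⟩

lemma reflAt_nice (R : RootSystemData V) {δ : V} (hδ : δ ∈ R.roots) :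
    IsNice R (reflAt δ) := by
  have hd := R.inner_self_ne hδ
  constructor
  · refine ⟨{ toFun := reflAt δ, map_add' := ?_, map_smul' := ?_ }, rfl⟩
    · intro x y
      simp only [reflAt_apply, inner_add_left]
      rw [show (2 * (⟪x,δ⟫ + ⟪y,δ⟫) / ⟪δ,δ⟫ : ℝ)
          = 2 * ⟪x,δ⟫/⟪δ,δ⟫ + 2*⟪y,δ⟫/⟪δ,δ⟫ by ring]
      module
    · intro c x
      simp only [reflAt_apply, real_inner_smul_left, RingHom.id_apply]
      rw [show (2 * (c * ⟪x,δ⟫) / ⟪δ,δ⟫ : ℝ) = c * (2 * ⟪x,δ⟫/⟪δ,δ⟫) by ring]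
      module
  · intro x y
    simp only [reflAt_apply]
    simp only [inner_sub_left, inner_sub_right, real_inner_smul_left, real_inner_smul_right,
      real_inner_comm δ y]
    field_simp
    ring
  · intro γ hγ
    exact R.reflect_mem γ hγ δ hδ
  · exact ⟨reflAt δ, reflAt_mem_weyl R hδ, reflAt_invol hd, reflAt_invol hd⟩

lemma nice_one (R : RootSystemData V) : IsNice R (1 : Function.End V) := by
  refine ⟨⟨LinearMap.id, rfl⟩, fun x y => rfl, fun γ hγ => hγ,
    ⟨1, Submonoid.one_mem _, fun x => rfl, fun x => rfl⟩⟩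

lemma nice_mul (R : RootSystemData V) {w w' : Function.End V}
    (hw : IsNice R w) (hw' : IsNice R w') : IsNice R (w * w') := by
  obtain ⟨L, hL⟩ := hw.lin
  obtain ⟨L', hL'⟩ := hw'.lin
  refine ⟨⟨L ∘ₗ L', by funext x; simp [end_mul_apply, hL, hL']; rfl⟩,
    fun x y => by rw [end_mul_apply, end_mul_apply, hw.inner_map, hw'.inner_map],
    fun γ hγ => hw.root_map _ (hw'.root_map γ hγ),
    ?_⟩
  obtain ⟨v, hv, hv1, hv2⟩ := hw.inv
  obtain ⟨v', hv', hv1', hv2'⟩ := hw'.inv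
  refine ⟨v' * v, Submonoid.mul_mem _ hv' hv, fun x => ?_, fun x => ?_⟩
  · show v' (v ((w (w' x)))) = x
    rw [hv1, hv1']
  · show w (w' (v' (v x))) = x
    rw [hv2', hv2]

lemma weyl_nice (R : RootSystemData V) {w : Function.End V} (hw : w ∈ weylGroup R) :
    IsNice R w := by
  induction hw using Submonoid.closure_induction with
  | mem x hx => obtain ⟨δ, hδ, rfl⟩ := hx; exact reflAt_nice R hδ
  | one => exact nice_one R
  | mul x y hx hy ihx ihy => exact nice_mul R ihx ihy

-- ### concentration helper

lemma sum_concentrate (R : RootSystemData V) {α : V} (hα : α ∈ R.simples) (c : V → ℕ)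
    (hc : ∀ β ∈ R.simples, β ≠ α → c β = 0) :
    ∑ β ∈ R.simples, (c β : ℝ) • β = (c α : ℝ) • α := by
  classical
  rw [← Finset.add_sum_erase _ (fun β => ((c β : ℝ) • β)) hα]
  have : ∑ β ∈ R.simples.erase α, ((c β : ℝ) • β) = 0 := by
    refine Finset.sum_eq_zero fun β hβ => ?_
    rcases Finset.mem_erase.1 hβ with ⟨hne, hβs⟩
    rw [hc β hβs hne]; simp
  rw [this, add_zero]

-- ### simple reflections permute the other positive roots

lemma reflAt_mem_roots (R : RootSystemData V) {γ δ : V} (hγ : γ ∈ R.roots)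
    (hδ : δ ∈ R.roots) : reflAt δ γ ∈ R.roots :=
  R.reflect_mem γ hγ δ hδ

lemma simple_refl_pos (R : RootSystemData V) {α γ : V} (hα : α ∈ R.simples)
    (hγ : γ ∈ R.pos) (hne : γ ≠ α) : reflAt α γ ∈ R.pos := by
  classical
  have hαr : α ∈ R.roots := R.pos_subset (R.simples_subset hα)
  have hγr : γ ∈ R.roots := R.pos_subset hγ
  have hsr : reflAt α γ ∈ R.roots := reflAt_mem_roots R hγr hαr
  by_contra hs
  have hneg : -(reflAt α γ) ∈ R.pos := (R.pos_or_neg _ hsr).resolve_left hs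
  obtain ⟨c, hcc⟩ := R.pos_combo γ hγ
  obtain ⟨b, hbb⟩ := R.pos_combo _ hneg
  set k : ℝ := 2 * ⟪γ, α⟫ / ⟪α, α⟫ with hk
  have hsum : ∑ β ∈ R.simples, ((c β : ℝ) + (b β : ℝ)) • β
      = ∑ β ∈ R.simples, (if β = α then k else 0) • β := by
    have hL : ∑ β ∈ R.simples, ((c β : ℝ) + (b β : ℝ)) • β = γ + -(reflAt α γ) := by
      calc ∑ β ∈ R.simples, ((c β : ℝ) + (b β : ℝ)) • β
          = (∑ β ∈ R.simples, (c β : ℝ) • β) + ∑ β ∈ R.simples, (b β : ℝ) • β := by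
            simp [add_smul, Finset.sum_add_distrib]
        _ = γ + -(reflAt α γ) := by rw [← hcc, ← hbb]
    have hR : ∑ β ∈ R.simples, (if β = α then k else 0) • β = k • α := by
      simp [ite_smul, Finset.sum_ite_eq', hα]
    rw [hL, hR, reflAt_apply, ← hk]
    module
  have huniq := coeff_unique R _ _ hsum
  have hc0 : ∀ β ∈ R.simples, β ≠ α → c β = 0 := by
    intro β hβ hne'
    have := huniq β hβ
    rw [if_neg hne'] at this
    have hcb : (0:ℝ) ≤ c β := Nat.cast_nonneg _
    have hbb' : (0:ℝ) ≤ b β := Nat.cast_nonneg _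
    have : (c β : ℝ) = 0 := by linarith
    exact_mod_cast this
  have hγα : γ = (c α : ℝ) • α := by rw [hcc, sum_concentrate R hα c hc0]
  have := R.reduced α hαr (c α) (hγα ▸ hγr)
  rcases this with h1 | h1
  · exact hne (by rw [hγα, h1, one_smul])
  · have : (0:ℝ) ≤ (c α : ℝ) := Nat.cast_nonneg _
    rw [h1] at this; linarith

-- ### root subtraction

lemma root_sub_mem (R : RootSystemData V) {γ δ : V} (hγ : γ ∈ R.roots) (hδ : δ ∈ R.roots)
    (hne : γ ≠ δ) (hpos : (0:ℝ) < ⟪γ, δ⟫) : γ - δ ∈ R.roots := by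
  obtain ⟨m, hm⟩ := R.crystallographic γ hγ δ hδ
  obtain ⟨n, hn⟩ := R.crystallographic δ hδ γ hγ
  have hd1 := R.inner_self_pos hγ
  have hd2 := R.inner_self_pos hδ
  have hγδ : (⟪δ, γ⟫:ℝ) = ⟪γ, δ⟫ := by rw [real_inner_comm]
  have hm_pos : (0:ℝ) < m := by rw [← hm]; positivity
  have hn_pos : (0:ℝ) < n := by rw [← hn, hγδ]; positivity
  have hm1 : 1 ≤ m := by exact_mod_cast hm_pos
  have hn1 : 1 ≤ n := by exact_mod_cast hn_pos
  -- Cauchy-Schwarz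
  have hcs : (⟪γ, δ⟫:ℝ) * ⟪γ, δ⟫ ≤ ⟪γ, γ⟫ * ⟪δ, δ⟫ := by
    have h1 : |(⟪γ, δ⟫:ℝ)| ≤ ‖γ‖ * ‖δ‖ := abs_real_inner_le_norm γ δ
    have h2 : (⟪γ, δ⟫:ℝ) * ⟪γ, δ⟫ = |⟪γ, δ⟫| * |⟪γ, δ⟫| := (abs_mul_abs_self _).symm
    rw [h2, real_inner_self_eq_norm_mul_norm, real_inner_self_eq_norm_mul_norm]
    calc |(⟪γ, δ⟫:ℝ)| * |⟪γ, δ⟫| ≤ (‖γ‖ * ‖δ‖) * (‖γ‖ * ‖δ‖) := by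
          apply mul_le_mul h1 h1 (abs_nonneg _); positivity
      _ = ‖γ‖ * ‖γ‖ * (‖δ‖ * ‖δ‖) := by ring
  have hprod : (m:ℝ) * n ≤ 4 := by
    rw [← hm, ← hn, hγδ]
    rw [div_mul_div_comm]
    rw [div_le_iff₀ (by positivity)]
    nlinarith
  have hmn4 : m * n ≤ 4 := by exact_mod_cast hprod
  rcases eq_or_lt_of_le hm1 with hm1' | hm2
  · -- m = 1
    have := R.reflect_mem γ hγ δ hδ
    rw [hm, ← hm1', Int.cast_one, one_smul] at this
    exact this
  · rcases eq_or_lt_of_le hn1 with hn1' | hn2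
    · -- n = 1
      have := R.reflect_mem δ hδ γ hγ
      rw [hn, ← hn1', Int.cast_one, one_smul] at this
      have := R.neg_mem _ this
      rw [neg_sub] at this
      exact this
    · -- m, n ≥ 2 : forces γ = δ
      exfalso
      have hm2' : 2 ≤ m := hm2
      have hn2' : 2 ≤ n := hn2
      have hm2'' : m = 2 := by nlinarith
      have hn2'' : n = 2 := by nlinarith
      have e1 : (⟪γ, δ⟫:ℝ) = ⟪δ, δ⟫ := by
        have : 2 * (⟪γ, δ⟫:ℝ) / ⟪δ, δ⟫ = 2 := by rw [hm, hm2'']; norm_num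
        field_simp at this
        linarith
      have e2 : (⟪γ, δ⟫:ℝ) = ⟪γ, γ⟫ := by
        have : 2 * (⟪δ, γ⟫:ℝ) / ⟪γ, γ⟫ = 2 := by rw [hn, hn2'']; norm_num
        rw [hγδ] at this
        field_simp at this
        linarith
      have : (⟪γ - δ, γ - δ⟫:ℝ) = 0 := by
        rw [inner_sub_left, inner_sub_right, inner_sub_right, hγδ]
        linarith
      have := inner_self_eq_zero.1 this
      exact hne (by rw [sub_eq_zero] at this; exact this)

-- ### decomposition of a non-simple positive root

lemma pos_decomp (R : RootSystemData V) {γ : V} (hγ : γ ∈ R.pos) (hns : γ ∉ R.simples) :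
    ∃ β ∈ R.simples, γ - β ∈ R.pos := by
  have hγr := R.pos_subset hγ
  obtain ⟨c, hc⟩ := R.pos_combo γ hγ
  have hexists : ∃ β ∈ R.simples, (0:ℝ) < ⟪γ, β⟫ := by
    by_contra hno
    push_neg at hno
    have : (⟪γ, γ⟫:ℝ) ≤ 0 := by
      conv_lhs => rw [show (⟪γ,γ⟫:ℝ) = ⟪γ, ∑ α ∈ R.simples, (c α : ℝ) • α⟫ by rw [← hc]]
      rw [inner_sum]
      refine Finset.sum_nonpos fun β hβ => ?_
      rw [real_inner_smul_right]
      have h1 : (0:ℝ) ≤ (c β : ℝ) := Nat.cast_nonneg _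
      have h2 := hno β hβ
      exact mul_nonpos_of_nonneg_of_nonpos h1 h2
    linarith [R.inner_self_pos hγr]
  obtain ⟨β, hβ, hβpos⟩ := hexists
  have hβr : β ∈ R.roots := R.pos_subset (R.simples_subset hβ)
  have hneβ : γ ≠ β := fun h => hns (h ▸ hβ)
  have hsub : γ - β ∈ R.roots := root_sub_mem R hγr hβr hneβ hβpos
  refine ⟨β, hβ, ?_⟩
  rw [mem_pos_iff_htf R hsub, map_sub, htf_simple R hβ]
  linarith [htf_ge_two R hγ hns]

-- ### a coclosed nonempty set of positive roots contains a simple root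

lemma coclosed_has_simple (R : RootSystemData V) (S : Finset V) (hS : S ⊆ R.pos)
    (hne : S.Nonempty)
    (hcoc : ∀ a ∈ R.pos, ∀ b ∈ R.pos, a ∉ S → b ∉ S → a + b ∈ R.roots → a + b ∉ S) :
    ∃ α ∈ S, α ∈ R.simples := by
  obtain ⟨γ, hγS, hγmin⟩ := S.exists_min_image (fun x => htf R x) hne
  by_cases hγsim : γ ∈ R.simples
  · exact ⟨γ, hγS, hγsim⟩
  obtain ⟨β, hβ, hsub⟩ := pos_decomp R (hS hγS) hγsim
  have hβp : β ∈ R.pos := R.simples_subset hβ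
  have hfγ := htf_ge_two R (hS hγS) hγsim
  have hfsub : htf R (γ - β) = htf R γ - 1 := by
    rw [map_sub, htf_simple R hβ]
  have hsubnot : γ - β ∉ S := by
    intro hmem
    have := hγmin _ hmem
    rw [hfsub] at this
    linarith
  have hβnot : β ∉ S := by
    intro hmem
    have := hγmin _ hmem
    rw [htf_simple R hβ] at this
    linarith
  have := hcoc _ hsub _ hβp hsubnot hβnot (by rw [sub_add_cancel]; exact R.pos_subset (hS hγS))
  rw [sub_add_cancel] at this
  exact absurd hγS this

-- ### inversion sets as finsets

open Classical in
noncomputable def invF (R : RootSystemData V) (w : Function.End V) : Finset V :=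
  R.pos.filter (fun γ => -(w γ) ∈ R.pos)

lemma mem_invF {R : RootSystemData V} {w : Function.End V} {γ : V} :
    γ ∈ invF R w ↔ γ ∈ R.pos ∧ -(w γ) ∈ R.pos := by
  classical
  simp [invF]

lemma invSet_eq_invF (R : RootSystemData V) (w : Function.End V) :
    invSet R w = ↑(invF R w) := by
  ext γ
  simp [invSet, mem_invF]

lemma IsNice.map_neg' {R : RootSystemData V} {w : Function.End V} (h : IsNice R w) (x : V) :
    w (-x) = -(w x) := by
  obtain ⟨L, hL⟩ := h.lin
  rw [hL, map_neg]

lemma not_mem_invF_pos {R : RootSystemData V} {w : Function.End V} (h : IsNice R w)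
    {γ : V} (hγ : γ ∈ R.pos) (hn : γ ∉ invF R w) : w γ ∈ R.pos := by
  rcases R.pos_or_neg (w γ) (h.root_map γ (R.pos_subset hγ)) with hp | hp
  · exact hp
  · exact absurd (mem_invF.2 ⟨hγ, hp⟩) hn

lemma reflAt_injective {δ : V} (hδ : (⟪δ,δ⟫:ℝ) ≠ 0) : Function.Injective (reflAt δ) :=
  Function.LeftInverse.injective (g := reflAt δ) (reflAt_invol hδ)

lemma refl_simple_ne {R : RootSystemData V} {α γ : V} (hα : α ∈ R.simples)
    (hγ : γ ∈ R.pos) (hne : γ ≠ α) : reflAt α γ ≠ α := by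
  intro he
  have hαd := R.inner_self_ne (R.pos_subset (R.simples_subset hα))
  have h2 := reflAt_invol hαd γ
  rw [he, reflAt_self hαd] at h2
  have : -γ = α := by rw [← h2, neg_neg]
  exact R.pos_neg_disjoint γ hγ (this ▸ (R.simples_subset hα))

lemma mem_invF_mul_reflAt {R : RootSystemData V} {w : Function.End V} (h : IsNice R w)
    {α : V} (hα : α ∈ R.simples) :
    (∀ γ ∈ R.pos, γ ≠ α → ((γ ∈ invF R (w * reflAt α)) ↔ reflAt α γ ∈ invF R w)) ∧
      ((α ∈ invF R (w * reflAt α)) ↔ α ∉ invF R w) := by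
  have hαp : α ∈ R.pos := R.simples_subset hα
  have hαr : α ∈ R.roots := R.pos_subset hαp
  have hαd := R.inner_self_ne hαr
  constructor
  · intro γ hγ hne
    have hsp : reflAt α γ ∈ R.pos := simple_refl_pos R hα hγ hne
    rw [mem_invF, mem_invF, end_mul_apply]
    tauto
  · rw [mem_invF, end_mul_apply, reflAt_self hαd, h.map_neg', neg_neg, mem_invF]
    constructor
    · rintro ⟨-, hw⟩ hmem
      exact R.pos_neg_disjoint _ hw hmem.2
    · intro hnot
      refine ⟨hαp, not_mem_invF_pos h hαp (fun hc => hnot (mem_invF.1 hc))⟩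

lemma invF_mul_reflAt_of_mem {R : RootSystemData V} {w : Function.End V} (h : IsNice R w)
    {α : V} (hα : α ∈ R.simples) (hmem : α ∈ invF R w) :
    invF R (w * reflAt α) = ((invF R w).erase α).image (reflAt α) := by
  classical
  have hαp : α ∈ R.pos := R.simples_subset hα
  have hαd := R.inner_self_ne (R.pos_subset hαp)
  obtain ⟨hgen, hself⟩ := mem_invF_mul_reflAt h hα
  ext γ
  simp only [Finset.mem_image (f := (reflAt α : V → V)), Finset.mem_erase]
  constructor
  · intro hγ
    have hγp : γ ∈ R.pos := (mem_invF.1 hγ).1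
    by_cases hne : γ = α
    · subst hne
      exact absurd hmem ((hself).1 hγ)
    · refine ⟨reflAt α γ, ⟨refl_simple_ne hα hγp hne, (hgen γ hγp hne).1 hγ⟩, reflAt_invol hαd γ⟩
  · rintro ⟨y, ⟨hyne, hy⟩, rfl⟩
    have hyp : y ∈ R.pos := (mem_invF.1 hy).1
    have h1 : reflAt α y ∈ R.pos := simple_refl_pos R hα hyp hyne
    have h2 : reflAt α y ≠ α := refl_simple_ne hα hyp hyne
    refine (hgen _ h1 h2).2 ?_
    rwa [reflAt_invol hαd]

lemma invF_mul_reflAt_of_not_mem {R : RootSystemData V} {w : Function.End V} (h : IsNice R w)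
    {α : V} (hα : α ∈ R.simples) (hmem : α ∉ invF R w) :
    invF R (w * reflAt α) = insert α (((invF R w)).image (reflAt α)) := by
  classical
  have hαp : α ∈ R.pos := R.simples_subset hα
  have hαd := R.inner_self_ne (R.pos_subset hαp)
  obtain ⟨hgen, hself⟩ := mem_invF_mul_reflAt h hα
  ext γ
  simp only [Finset.mem_insert, Finset.mem_image (f := (reflAt α : V → V))]
  constructor
  · intro hγ
    have hγp : γ ∈ R.pos := (mem_invF.1 hγ).1
    by_cases hne : γ = α
    · exact Or.inl hne
    · exact Or.inr ⟨reflAt α γ, (hgen γ hγp hne).1 hγ, reflAt_invol hαd γ⟩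
  · rintro (rfl | ⟨y, hy, rfl⟩)
    · exact (hself).2 hmem
    · have hyp : y ∈ R.pos := (mem_invF.1 hy).1
      have hyne : y ≠ α := by
        rintro rfl
        exact hmem hy
      have h1 : reflAt α y ∈ R.pos := simple_refl_pos R hα hyp hyne
      have h2 : reflAt α y ≠ α := refl_simple_ne hα hyp hyne
      refine (hgen _ h1 h2).2 ?_
      rwa [reflAt_invol hαd]

-- ### more IsNice helpers

lemma IsNice.map_add' {R : RootSystemData V} {w : Function.End V} (h : IsNice R w) (x y : V) :
    w (x + y) = w x + w y := by
  obtain ⟨L, hL⟩ := h.lin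
  rw [hL, map_add]

lemma conj_reflAt {R : RootSystemData V} {u : Function.End V} (h : IsNice R u)
    {δ : V} (hδ : δ ∈ R.roots) (x : V) :
    reflAt (u δ) (u x) = u (reflAt δ x) := by
  obtain ⟨L, hL⟩ := h.lin
  rw [reflAt_apply, reflAt_apply, h.inner_map, h.inner_map, hL, map_sub, map_smul]

-- ### simple words

noncomputable def wordProd (l : List V) : Function.End V := (l.map reflAt).prod

lemma wordProd_nil : wordProd ([] : List V) = 1 := rfl

lemma wordProd_cons (β : V) (t : List V) : wordProd (β :: t) = reflAt β * wordProd t := by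
  simp [wordProd, List.prod_cons]

lemma wordProd_append (s t : List V) : wordProd (s ++ t) = wordProd s * wordProd t := by
  simp [wordProd, List.prod_append]

lemma wordProd_mem (R : RootSystemData V) (l : List V) (h : ∀ β ∈ l, β ∈ R.roots) :
    wordProd l ∈ weylGroup R := by
  induction l with
  | nil => exact Submonoid.one_mem _
  | cons β t ih =>
    rw [wordProd_cons]
    exact Submonoid.mul_mem _ (reflAt_mem_weyl R (h β (by simp)))
      (ih fun x hx => h x (by simp [hx]))

lemma simple_word_mem (R : RootSystemData V) (l : List V) (h : ∀ β ∈ l, β ∈ R.simples) :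
    wordProd l ∈ weylGroup R :=
  wordProd_mem R l fun β hβ => R.pos_subset (R.simples_subset (h β hβ))

lemma exists_simple_inner_pos (R : RootSystemData V) {γ : V} (hγ : γ ∈ R.pos) :
    ∃ β ∈ R.simples, (0:ℝ) < ⟪γ, β⟫ := by
  obtain ⟨c, hc⟩ := R.pos_combo γ hγ
  by_contra hno
  push_neg at hno
  have hle : (⟪γ, γ⟫:ℝ) ≤ 0 := by
    conv_lhs => rw [show (⟪γ,γ⟫:ℝ) = ⟪γ, ∑ α ∈ R.simples, (c α : ℝ) • α⟫ by rw [← hc]]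
    rw [inner_sum]
    refine Finset.sum_nonpos fun β hβ => ?_
    rw [real_inner_smul_right]
    exact mul_nonpos_of_nonneg_of_nonpos (Nat.cast_nonneg _) (hno β hβ)
  linarith [R.inner_self_pos (R.pos_subset hγ)]

lemma refl_pos_word (R : RootSystemData V) :
    ∀ n : ℕ, ∀ δ ∈ R.pos, htf R δ = (n:ℝ) →
      ∃ l : List V, (∀ β ∈ l, β ∈ R.simples) ∧ reflAt δ = wordProd l := by
  intro n
  induction n using Nat.strong_induction_on with
  | _ n ih =>
    intro δ hδ hht
    by_cases hsim : δ ∈ R.simples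
    · refine ⟨[δ], by simp [hsim], ?_⟩
      rw [wordProd_cons, wordProd_nil, mul_one]
    · obtain ⟨β, hβ, hβpos⟩ := exists_simple_inner_pos R hδ
      have hβr : β ∈ R.roots := R.pos_subset (R.simples_subset hβ)
      have hδr : δ ∈ R.roots := R.pos_subset hδ
      have hne : δ ≠ β := fun h => hsim (h ▸ hβ)
      have hδ' : reflAt β δ ∈ R.pos := simple_refl_pos R hβ hδ hne
      obtain ⟨m, hm⟩ := R.crystallographic δ hδr β hβr
      have hm_pos : (0:ℝ) < m := by
        rw [← hm]
        exact div_pos (by linarith) (R.inner_self_pos hβr)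
      have hm1 : 1 ≤ m := by exact_mod_cast hm_pos
      have hht' : htf R (reflAt β δ) = htf R δ - m * 1 := by
        rw [reflAt_apply, map_sub, map_smul, hm, htf_simple R hβ]
        simp
      obtain ⟨n', hn', _⟩ := htf_pos_nat R hδ'
      have hlt : n' < n := by
        have : (n' : ℝ) < n := by
          rw [← hn', hht', hht]
          have : (1:ℝ) ≤ m := by exact_mod_cast hm1
          linarith
        exact_mod_cast this
      obtain ⟨l', hl', heq⟩ := ih n' hlt _ hδ' hn'
      refine ⟨β :: (l' ++ [β]), ?_, ?_⟩
      · intro x hx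
        rcases List.mem_cons.1 hx with rfl | hx2
        · exact hβ
        rcases List.mem_append.1 hx2 with h | h
        · exact hl' x h
        · rw [List.mem_singleton] at h; exact h ▸ hβ
      · have hβd := R.inner_self_ne hβr
        have hδeq : δ = reflAt β (reflAt β δ) := (reflAt_invol hβd δ).symm
        funext x
        rw [wordProd_cons, wordProd_append, wordProd_cons, wordProd_nil, mul_one, ← heq]
        show reflAt δ x = reflAt β (reflAt (reflAt β δ) (reflAt β x))
        have := conj_reflAt (reflAt_nice R hβr) (R.pos_subset hδ')
          (x := reflAt β x) (δ := reflAt β δ)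
        rw [← hδeq] at this
        rw [reflAt_invol hβd x] at this
        exact this

lemma refl_word (R : RootSystemData V) {δ : V} (hδ : δ ∈ R.roots) :
    ∃ l : List V, (∀ β ∈ l, β ∈ R.simples) ∧ reflAt δ = wordProd l := by
  rcases R.pos_or_neg δ hδ with hp | hp
  · obtain ⟨n, hn, -⟩ := htf_pos_nat R hp
    exact refl_pos_word R n δ hp hn
  · obtain ⟨n, hn, -⟩ := htf_pos_nat R hp
    obtain ⟨l, hl, heq⟩ := refl_pos_word R n _ hp hn
    exact ⟨l, hl, by rw [← heq, reflAt_neg]⟩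

lemma weyl_word (R : RootSystemData V) {w : Function.End V} (hw : w ∈ weylGroup R) :
    ∃ l : List V, (∀ β ∈ l, β ∈ R.simples) ∧ w = wordProd l := by
  induction hw using Submonoid.closure_induction with
  | mem x hx =>
    obtain ⟨δ, hδ, rfl⟩ := hx
    exact refl_word R hδ
  | one => exact ⟨[], by simp, rfl⟩
  | mul x y hx hy ihx ihy =>
    obtain ⟨lx, hlx, rfl⟩ := ihx
    obtain ⟨ly, hly, rfl⟩ := ihy
    refine ⟨lx ++ ly, ?_, (wordProd_append lx ly).symm⟩
    intro β hβ
    rcases List.mem_append.1 hβ with h | h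
    · exact hlx β h
    · exact hly β h

-- ### exchange lemma

lemma exchange (R : RootSystemData V) :
    ∀ l : List V, (∀ β ∈ l, β ∈ R.simples) → ∀ α ∈ R.simples,
      wordProd l α ∉ R.pos →
      ∃ l' : List V, (∀ β ∈ l', β ∈ R.simples) ∧ l'.length + 1 = l.length ∧
        wordProd l * reflAt α = wordProd l' := by
  intro l
  induction l with
  | nil =>
    intro _ α hα hno
    exact absurd (R.simples_subset hα) hno
  | cons β t ih =>
    intro hl α hα hno
    have hβ : β ∈ R.simples := hl β (by simp)
    have ht : ∀ x ∈ t, x ∈ R.simples := fun x hx => hl x (by simp [hx])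
    have hu : wordProd t ∈ weylGroup R := simple_word_mem R t ht
    have hu_nice : IsNice R (wordProd t) := weyl_nice R hu
    have hαr : α ∈ R.roots := R.pos_subset (R.simples_subset hα)
    have huα_root : wordProd t α ∈ R.roots := hu_nice.root_map α hαr
    have hβd := R.inner_self_ne (R.pos_subset (R.simples_subset hβ))
    by_cases hcase : wordProd t α ∈ R.pos
    · -- head must be the image
      have heq : wordProd t α = β := by
        by_contra hne
        have := simple_refl_pos R hβ hcase hne
        rw [wordProd_cons, end_mul_apply] at hno
        exact hno this
      refine ⟨t, ht, by simp, ?_⟩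
      funext x
      rw [end_mul_apply, wordProd_cons, end_mul_apply, ← heq]
      have hc := conj_reflAt hu_nice hαr (x := reflAt α x)
      rw [reflAt_invol (R.inner_self_ne hαr) x] at hc
      rw [hc]
    · obtain ⟨t', ht', hlen, heq⟩ := ih ht α hα hcase
      refine ⟨β :: t', ?_, by simp [← hlen], ?_⟩
      · intro x hx
        rcases List.mem_cons.1 hx with rfl | hx2
        · exact hβ
        · exact ht' x hx2
      · rw [wordProd_cons, wordProd_cons, mul_assoc, heq]

-- ### only the identity has no inversions

lemma no_inv_eq_one (R : RootSystemData V) :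
    ∀ n : ℕ, ∀ l : List V, l.length = n → (∀ β ∈ l, β ∈ R.simples) →
      (∀ γ ∈ R.pos, wordProd l γ ∈ R.pos) → wordProd l = 1 := by
  intro n
  induction n using Nat.strong_induction_on with
  | _ n ihn =>
    intro l hlen hl hpos
    rcases List.eq_nil_or_concat l with rfl | ⟨t, α, rfl⟩
    · rfl
    · simp only [List.concat_eq_append] at hlen hl hpos ⊢
      have hα : α ∈ R.simples := hl α (by simp)
      have ht : ∀ x ∈ t, x ∈ R.simples := fun x hx => hl x (by simp [hx])
      have hαp : α ∈ R.pos := R.simples_subset hα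
      have hαr : α ∈ R.roots := R.pos_subset hαp
      have hu_nice : IsNice R (wordProd t) := weyl_nice R (simple_word_mem R t ht)
      have hsplit : wordProd (t ++ [α]) = wordProd t * reflAt α := by
        rw [wordProd_append, wordProd_cons, wordProd_nil, mul_one]
      have hvα : wordProd (t ++ [α]) α = -(wordProd t α) := by
        rw [hsplit, end_mul_apply, reflAt_self (R.inner_self_ne hαr), hu_nice.map_neg']
      have huα_not : wordProd t α ∉ R.pos := by
        intro hmem
        have h1 := hpos α hαp
        rw [hvα] at h1
        exact R.pos_neg_disjoint _ hmem h1
      obtain ⟨t', ht', hlen', heq⟩ := exchange R t ht α hα huα_not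
      have hveq : wordProd (t ++ [α]) = wordProd t' := by rw [hsplit, heq]
      have hlt : t'.length < n := by
        have h2 : t.length + 1 = n := by rw [← hlen]; simp
        omega
      have := ihn t'.length hlt t' rfl ht' (by rw [← hveq]; exact hpos)
      rw [hveq, this]

lemma weyl_no_inv_eq_one (R : RootSystemData V) {w : Function.End V}
    (hw : w ∈ weylGroup R) (hpos : ∀ γ ∈ R.pos, w γ ∈ R.pos) : w = 1 := by
  obtain ⟨l, hl, rfl⟩ := weyl_word R hw
  exact no_inv_eq_one R l.length l rfl hl hpos

-- ### inversion sets are coclosed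

lemma invF_coclosed (R : RootSystemData V) {w : Function.End V} (h : IsNice R w) :
    ∀ a ∈ R.pos, ∀ b ∈ R.pos, a ∉ invF R w → b ∉ invF R w → a + b ∈ R.roots →
      a + b ∉ invF R w := by
  intro a ha b hb hna hnb hab hmem
  have h1 : w a ∈ R.pos := not_mem_invF_pos h ha hna
  have h2 : w b ∈ R.pos := not_mem_invF_pos h hb hnb
  have h3 : w (a + b) = w a + w b := h.map_add' a b
  have h4 : w (a + b) ∈ R.roots := h.root_map _ hab
  have h5 : w (a + b) ∈ R.pos := by
    rw [h3]; exact sum_pos_mem R h1 h2 (h3 ▸ h4)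
  exact R.pos_neg_disjoint _ h5 (mem_invF.1 hmem).2

lemma invF_one (R : RootSystemData V) : invF R (1 : Function.End V) = ∅ := by
  ext γ
  simp only [mem_invF, Finset.notMem_empty, iff_false]
  rintro ⟨h1, h2⟩
  exact R.pos_neg_disjoint _ h1 h2

lemma invF_subset_pos (R : RootSystemData V) (w : Function.End V) : invF R w ⊆ R.pos :=
  fun γ hγ => (mem_invF.1 hγ).1

-- ### uniqueness: the inversion set determines the Weyl group element

lemma weyl_eq_of_invF_eq (R : RootSystemData V) :
    ∀ n : ℕ, ∀ w ∈ weylGroup R, ∀ w' ∈ weylGroup R,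
      (invF R w).card = n → invF R w = invF R w' → w = w' := by
  intro n
  induction n using Nat.strong_induction_on with
  | _ n ihn =>
    intro w hw w' hw' hcard heq
    have hnice := weyl_nice R hw
    have hnice' := weyl_nice R hw'
    rcases Nat.eq_zero_or_pos n with rfl | hpos
    · have he : invF R w = ∅ := Finset.card_eq_zero.1 hcard
      have he' : invF R w' = ∅ := heq ▸ he
      have h1 : w = 1 := weyl_no_inv_eq_one R hw fun γ hγ =>
        not_mem_invF_pos hnice hγ (by rw [he]; exact Finset.notMem_empty _)
      have h2 : w' = 1 := weyl_no_inv_eq_one R hw' fun γ hγ =>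
        not_mem_invF_pos hnice' hγ (by rw [he']; exact Finset.notMem_empty _)
      rw [h1, h2]
    · have hne : (invF R w).Nonempty := Finset.card_pos.1 (hcard ▸ hpos)
      obtain ⟨α, hαS, hα⟩ := coclosed_has_simple R (invF R w) (invF_subset_pos R w) hne
        (invF_coclosed R hnice)
      have hαr : α ∈ R.roots := R.pos_subset (R.simples_subset hα)
      have hαd := R.inner_self_ne hαr
      have hS1 : invF R (w * reflAt α) = ((invF R w).erase α).image (reflAt α) :=
        invF_mul_reflAt_of_mem hnice hα hαS
      have hS2 : invF R (w' * reflAt α) = ((invF R w').erase α).image (reflAt α) :=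
        invF_mul_reflAt_of_mem hnice' hα (heq ▸ hαS)
      have hcard' : (invF R (w * reflAt α)).card = n - 1 := by
        rw [hS1, Finset.card_image_of_injective _ (reflAt_injective hαd),
          Finset.card_erase_of_mem hαS, hcard]
      have heq' : invF R (w * reflAt α) = invF R (w' * reflAt α) := by
        rw [hS1, hS2, heq]
      have hlt : n - 1 < n := by omega
      have := ihn (n-1) hlt (w * reflAt α)
        (Submonoid.mul_mem _ hw (reflAt_mem_weyl R hαr)) (w' * reflAt α)
        (Submonoid.mul_mem _ hw' (reflAt_mem_weyl R hαr)) hcard' heq'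
      funext x
      have hx := congrFun this (reflAt α x)
      simp only [end_mul_apply] at hx
      rwa [reflAt_invol hαd] at hx

-- ### existence: every biclosed set of positive roots is an inversion set

lemma htf_ne_simple_sum (R : RootSystemData V) {a b α : V} (ha : a ∈ R.pos) (hb : b ∈ R.pos)
    (hα : α ∈ R.simples) : a + b ≠ α := by
  intro h
  have := htf_pos_ge_one R ha
  have := htf_pos_ge_one R hb
  have h2 : htf R (a+b) = 1 := by rw [h, htf_simple R hα]
  rw [map_add] at h2
  linarith

lemma exists_weyl_of_biclosed (R : RootSystemData V) :
    ∀ n : ℕ, ∀ S : Finset V, S.card = n → S ⊆ R.pos →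
      (∀ a ∈ S, ∀ b ∈ S, a + b ∈ R.roots → a + b ∈ S) →
      (∀ a ∈ R.pos, ∀ b ∈ R.pos, a ∉ S → b ∉ S → a + b ∈ R.roots → a + b ∉ S) →
      ∃ w ∈ weylGroup R, invF R w = S := by
  intro n
  induction n using Nat.strong_induction_on with
  | _ n ihn =>
    intro S hcard hSpos hclosed hcoc
    rcases Finset.eq_empty_or_nonempty S with rfl | hne
    · exact ⟨1, Submonoid.one_mem _, invF_one R⟩
    obtain ⟨α, hαS, hα⟩ := coclosed_has_simple R S hSpos hne hcoc
    have hαp : α ∈ R.pos := R.simples_subset hα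
    have hαr : α ∈ R.roots := R.pos_subset hαp
    have hαd := R.inner_self_ne hαr
    have hα_nice : IsNice R (reflAt α) := reflAt_nice R hαr
    set s : Function.End V := reflAt α with hs
    set S' : Finset V := (S.erase α).image s with hS'
    have hmem_S' : ∀ {x : V}, x ∈ S' ↔ ∃ y ∈ S, y ≠ α ∧ s y = x := by
      intro x
      rw [hS', Finset.mem_image (f := (s : V → V))]
      constructor
      · rintro ⟨y, hy, rfl⟩
        rcases Finset.mem_erase.1 hy with ⟨h1, h2⟩
        exact ⟨y, h2, h1, rfl⟩
      · rintro ⟨y, hy, h1, rfl⟩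
        exact ⟨y, Finset.mem_erase.2 ⟨h1, hy⟩, rfl⟩
    have hS'_pos : S' ⊆ R.pos := by
      intro x hx
      obtain ⟨y, hy, hyne, rfl⟩ := hmem_S'.1 hx
      exact simple_refl_pos R hα (hSpos hy) hyne
    have hs_add : ∀ x y : V, s (x + y) = s x + s y := hα_nice.map_add'
    have hs_root : ∀ x ∈ R.roots, s x ∈ R.roots := hα_nice.root_map
    have hs_inv : ∀ x : V, s (s x) = x := reflAt_invol hαd
    have hs_self : s α = -α := reflAt_self hαd
    -- S' is closed
    have hclosed' : ∀ a ∈ S', ∀ b ∈ S', a + b ∈ R.roots → a + b ∈ S' := by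
      intro x hx y hy hxy
      obtain ⟨a, ha, hane, rfl⟩ := hmem_S'.1 hx
      obtain ⟨b, hb, hbne, rfl⟩ := hmem_S'.1 hy
      have hab_root : a + b ∈ R.roots := by
        have h2 := hs_root _ hxy
        rw [← hs_add, hs_inv] at h2
        exact h2
      have hab_S : a + b ∈ S := hclosed a ha b hb hab_root
      have hab_ne : a + b ≠ α := htf_ne_simple_sum R (hSpos ha) (hSpos hb) hα
      rw [← hs_add]
      exact hmem_S'.2 ⟨a + b, hab_S, hab_ne, rfl⟩
    -- S' is coclosed
    have hcoc' : ∀ a ∈ R.pos, ∀ b ∈ R.pos, a ∉ S' → b ∉ S' → a + b ∈ R.roots → a + b ∉ S' := by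
      intro x hx y hy hxn hyn hxy hmem
      obtain ⟨c, hc, hcne, hceq⟩ := hmem_S'.1 hmem
      have hc_eq : c = s (x + y) := by rw [← hceq, hs_inv]
      by_cases hx0 : x = α
      · have hsy : s y = c + α := by
          rw [hc_eq, hx0, hs_add, hs_self]
          module
        have hsy_root : s y ∈ R.roots := hs_root _ (R.pos_subset hy)
        have hsy_S : s y ∈ S := by
          rw [hsy]
          exact hclosed c hc α hαS (by rw [← hsy]; exact hsy_root)
        have hsy_ne : s y ≠ α := by
          rw [hsy]
          exact htf_ne_simple_sum R (hSpos hc) hαp hα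
        exact hyn (hmem_S'.2 ⟨s y, hsy_S, hsy_ne, hs_inv y⟩)
      by_cases hy0 : y = α
      · have hsx : s x = c + α := by
          rw [hc_eq, hy0, hs_add, hs_self]
          module
        have hsx_root : s x ∈ R.roots := hs_root _ (R.pos_subset hx)
        have hsx_S : s x ∈ S := by
          rw [hsx]
          exact hclosed c hc α hαS (by rw [← hsx]; exact hsx_root)
        have hsx_ne : s x ≠ α := by
          rw [hsx]
          exact htf_ne_simple_sum R (hSpos hc) hαp hα
        exact hxn (hmem_S'.2 ⟨s x, hsx_S, hsx_ne, hs_inv x⟩)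
      -- generic case
      have hapos : s x ∈ R.pos := simple_refl_pos R hα hx hx0
      have hbpos : s y ∈ R.pos := simple_refl_pos R hα hy hy0
      have haS : s x ∉ S := by
        intro hmem'
        exact hxn (hmem_S'.2 ⟨s x, hmem', refl_simple_ne hα hx hx0, hs_inv x⟩)
      have hbS : s y ∉ S := by
        intro hmem'
        exact hyn (hmem_S'.2 ⟨s y, hmem', refl_simple_ne hα hy hy0, hs_inv y⟩)
      have hab_eq : s x + s y = c := by rw [hc_eq, hs_add]
      have hab_root : s x + s y ∈ R.roots := hab_eq ▸ R.pos_subset (hSpos hc)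
      exact (hcoc _ hapos _ hbpos haS hbS hab_root) (hab_eq ▸ hc)
    -- apply the induction hypothesis
    have hcard' : S'.card = n - 1 := by
      rw [hS', Finset.card_image_of_injective _ (reflAt_injective hαd),
        Finset.card_erase_of_mem hαS, hcard]
    obtain ⟨w', hw', hw'eq⟩ := ihn (n-1)
      (by
        have hn1 : 1 ≤ n := by rw [← hcard]; exact Finset.card_pos.2 hne
        omega) S' hcard' hS'_pos hclosed' hcoc'
    have hα_not : α ∉ invF R w' := by
      rw [hw'eq]
      intro hmem
      obtain ⟨y, hy, hyne, hyeq⟩ := hmem_S'.1 hmem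
      have hy2 : y = -α := by rw [← hs_inv y, hyeq, hs_self]
      rw [hy2] at hy
      exact R.pos_neg_disjoint _ (hSpos hy) (by rw [neg_neg]; exact hαp)
    refine ⟨w' * reflAt α, Submonoid.mul_mem _ hw' (reflAt_mem_weyl R hαr), ?_⟩
    rw [invF_mul_reflAt_of_not_mem (weyl_nice R hw') hα hα_not, hw'eq]
    have himg : S'.image s = S.erase α := by
      rw [hS', Finset.image_image (f := (s : V → V)) (g := (s : V → V))]
      have hid : ((fun x => s x) ∘ fun x => s x) = id := by
        funext x; exact hs_inv x
      rw [show ((s : V → V) ∘ (s : V → V)) = id from hid, Finset.image_id]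
    rw [show Finset.image (reflAt α) S' = S'.image s from rfl, himg, Finset.insert_erase hαS]


-- ### auxiliary facts about the grading

lemma ell_nonneg_pos (R : RootSystemData V) (ℓ : V →ₗ[ℝ] ℝ)
    (hsimp : ∀ α ∈ R.simples, 0 ≤ ℓ α) {γ : V} (hγ : γ ∈ R.pos) : 0 ≤ ℓ γ := by
  obtain ⟨c, hc⟩ := R.pos_combo γ hγ
  rw [hc, map_sum]
  refine Finset.sum_nonneg fun α hα => ?_
  rw [map_smul, smul_eq_mul]
  exact mul_nonneg (Nat.cast_nonneg _) (hsimp α hα)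

lemma gradeOne_pos (R : RootSystemData V) (ℓ : V →ₗ[ℝ] ℝ)
    (hsimp : ∀ α ∈ R.simples, 0 ≤ ℓ α) {γ : V} (hγ : γ ∈ gradeOne R ℓ) : γ ∈ R.pos := by
  obtain ⟨hγr, hγ1⟩ := hγ
  rcases R.pos_or_neg γ hγr with hp | hp
  · exact hp
  · have := ell_nonneg_pos R ℓ hsimp hp
    rw [map_neg] at this
    linarith

lemma ell_pos_01 (R : RootSystemData V) (ℓ : V →ₗ[ℝ] ℝ)
    (hab : ∀ γ ∈ R.roots, ℓ γ = -1 ∨ ℓ γ = 0 ∨ ℓ γ = 1)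
    (hsimp : ∀ α ∈ R.simples, 0 ≤ ℓ α) {γ : V} (hγ : γ ∈ R.pos) : ℓ γ = 0 ∨ ℓ γ = 1 := by
  have h0 := ell_nonneg_pos R ℓ hsimp hγ
  rcases hab γ (R.pos_subset hγ) with h | h | h
  · linarith
  · exact Or.inl h
  · exact Or.inr h

lemma zero_grade_combo (R : RootSystemData V) (ℓ : V →ₗ[ℝ] ℝ)
    (hsimp : ∀ α ∈ R.simples, 0 ≤ ℓ α) {μ : V} (hμ : μ ∈ R.pos) (h0 : ℓ μ = 0) :
    ∃ c : V → ℕ, (∀ α, α ∉ {α : V | ℓ α = 0} → c α = 0) ∧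
      μ = ∑ α ∈ R.simples, (c α : ℝ) • α := by
  obtain ⟨c, hc⟩ := R.pos_combo μ hμ
  refine ⟨fun α => if α ∈ R.simples then c α else 0, ?_, ?_⟩
  · intro α hα
    simp only [Set.mem_setOf_eq] at hα
    by_cases hm : α ∈ R.simples
    · simp only [hm, if_true]
      -- every term in the expansion of ℓ μ = 0 vanishes
      have hsum : ∑ β ∈ R.simples, (c β : ℝ) * ℓ β = 0 := by
        rw [← h0, hc, map_sum]
        refine Finset.sum_congr rfl fun β hβ => ?_
        rw [map_smul, smul_eq_mul]
      have hterm : ∀ β ∈ R.simples, 0 ≤ (c β : ℝ) * ℓ β := fun β hβ =>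
        mul_nonneg (Nat.cast_nonneg _) (hsimp β hβ)
      have := (Finset.sum_eq_zero_iff_of_nonneg hterm).1 hsum α hm
      rcases mul_eq_zero.1 this with h | h
      · exact_mod_cast h
      · exact absurd h hα
    · simp [hm]
  · rw [hc]
    exact Finset.sum_congr rfl fun β hβ => by simp [hβ]

-- ### Part 1: `I_w` is an upper ideal

lemma part_one (R : RootSystemData V) (ℓ : V →ₗ[ℝ] ℝ)
    (hab : ∀ γ ∈ R.roots, ℓ γ = -1 ∨ ℓ γ = 0 ∨ ℓ γ = 1)
    (hsimp : ∀ α ∈ R.simples, 0 ≤ ℓ α) :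
    ∀ w ∈ minLengthReps R ℓ, ∀ μ ∈ idealOf R ℓ w, ∀ γ ∈ gradeOne R ℓ,
        rootLEon R.simples {α | ℓ α = 0} μ γ → γ ∈ idealOf R ℓ w := by
  intro w hw μ hμ γ hγ hle
  obtain ⟨hwW, hwmin⟩ := hw
  obtain ⟨hμ1, hμ2⟩ := hμ
  have hnice := weyl_nice R hwW
  obtain ⟨L, hL⟩ := hnice.lin
  refine ⟨hγ, fun hinv => ?_⟩
  obtain ⟨hγpos, hγneg⟩ := hinv
  obtain ⟨c, hsupp, hγeq⟩ := hle
  have hμpos : μ ∈ R.pos := gradeOne_pos R ℓ hsimp hμ1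
  -- w γ = w μ + ∑ c α • w α
  have hwγ : w γ = w μ + ∑ α ∈ R.simples, (c α : ℝ) • w α := by
    rw [hL, hγeq, map_add, map_sum]
    congr 1
    exact Finset.sum_congr rfl fun α hα => by rw [map_smul]
  set f : V →ₗ[ℝ] ℝ := htf R with hf
  have hfγ : f (w γ) ≤ -1 := by
    have h1 : 1 ≤ f (-(w γ)) := htf_pos_ge_one R hγneg
    rw [map_neg] at h1
    linarith
  have hsum_nonneg : 0 ≤ ∑ α ∈ R.simples, (c α : ℝ) * f (w α) := by
    refine Finset.sum_nonneg fun α hα => ?_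
    by_cases hc0 : c α = 0
    · simp [hc0]
    · have hα0 : ℓ α = 0 := by
        by_contra hne
        exact hc0 (hsupp α (by simpa using hne))
      have hwα : w α ∈ R.pos := hwmin α (R.simples_subset hα) hα0
      exact mul_nonneg (Nat.cast_nonneg _) (by linarith [htf_pos_ge_one R hwα])
  have hfwμ : f (w μ) ≤ -1 + 0 := by
    have : f (w γ) = f (w μ) + ∑ α ∈ R.simples, (c α : ℝ) * f (w α) := by
      rw [hwγ, map_add, map_sum]
      congr 1
      exact Finset.sum_congr rfl fun α hα => by rw [map_smul, smul_eq_mul]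
    linarith
  have hwμ_root : w μ ∈ R.roots := hnice.root_map μ (R.pos_subset hμpos)
  have hwμ_neg : -(w μ) ∈ R.pos := by
    rcases R.pos_or_neg _ hwμ_root with hp | hp
    · exfalso
      have := htf_pos_ge_one R hp
      rw [← hf] at this
      linarith
    · exact hp
  exact hμ2 ⟨hμpos, hwμ_neg⟩

-- ### Part 2: bijection with upper ideals

lemma part_two (R : RootSystemData V) (ℓ : V →ₗ[ℝ] ℝ)
    (hab : ∀ γ ∈ R.roots, ℓ γ = -1 ∨ ℓ γ = 0 ∨ ℓ γ = 1)
    (hsimp : ∀ α ∈ R.simples, 0 ≤ ℓ α) :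
    ∀ I : Set V, I ⊆ gradeOne R ℓ →
        (∀ μ ∈ I, ∀ γ ∈ gradeOne R ℓ, rootLEon R.simples {α | ℓ α = 0} μ γ → γ ∈ I) →
        ∃! w, w ∈ minLengthReps R ℓ ∧ I = idealOf R ℓ w := by
  intro I hIsub hIup
  classical
  set J : Finset V := R.pos.filter (fun γ => ℓ γ = 1 ∧ γ ∉ I) with hJ
  have mem_J : ∀ {γ : V}, γ ∈ J ↔ γ ∈ R.pos ∧ ℓ γ = 1 ∧ γ ∉ I := by
    intro γ; rw [hJ, Finset.mem_filter]
  have hJpos : J ⊆ R.pos := Finset.filter_subset _ _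
  have hJclosed : ∀ a ∈ J, ∀ b ∈ J, a + b ∈ R.roots → a + b ∈ J := by
    intro a ha b hb hab'
    exfalso
    have h1 := (mem_J.1 ha).2.1
    have h2 := (mem_J.1 hb).2.1
    rcases hab _ hab' with h | h | h <;> rw [map_add] at h <;> linarith
  have hJcoc : ∀ a ∈ R.pos, ∀ b ∈ R.pos, a ∉ J → b ∉ J → a + b ∈ R.roots → a + b ∉ J := by
    intro a ha b hb hna hnb habr hmem
    obtain ⟨habp, hab1, habI⟩ := mem_J.1 hmem
    have hkey : ∀ x y : V, x ∈ R.pos → y ∈ R.pos → y ∉ J → ℓ x = 0 → ℓ y = 1 →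
        x + y ∈ R.roots → x + y ∈ gradeOne R ℓ → x + y ∉ I → False := by
      intro x y hx hy hyn hx0 hy1 hxyr hxyg hxyI
      have hyI : y ∈ I := by
        by_contra hyI
        exact hyn (mem_J.2 ⟨hy, hy1, hyI⟩)
      obtain ⟨c, hsupp, hceq⟩ := zero_grade_combo R ℓ hsimp hx hx0
      have : x + y ∈ I := by
        refine hIup y hyI (x+y) hxyg ⟨c, hsupp, ?_⟩
        rw [← hceq, add_comm]
      exact hxyI this
    have hxyg : a + b ∈ gradeOne R ℓ := ⟨habr, hab1⟩
    rcases ell_pos_01 R ℓ hab hsimp ha with h0a | h1a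
    · have h1b : ℓ b = 1 := by
        have := map_add ℓ a b
        rw [hab1, h0a] at this
        linarith [this]
      exact hkey a b ha hb hnb h0a h1b habr hxyg habI
    · have h0b : ℓ b = 0 := by
        have := map_add ℓ a b
        rw [hab1, h1a] at this
        linarith [this]
      have hba : b + a = a + b := add_comm b a
      exact hkey b a hb ha hna h0b h1a (hba ▸ habr) (hba ▸ hxyg) (hba ▸ habI)
  obtain ⟨w, hwW, hwinv⟩ := exists_weyl_of_biclosed R J.card J rfl hJpos hJclosed hJcoc
  have hwnice := weyl_nice R hwW
  have hwmin : w ∈ minLengthReps R ℓ := by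
    refine ⟨hwW, fun α hαp hα0 => ?_⟩
    have hαJ : α ∉ J := by
      intro hmem
      have := (mem_J.1 hmem).2.1
      linarith
    exact not_mem_invF_pos hwnice hαp (by rw [hwinv]; exact hαJ)
  have hinvSet : invSet R w = ↑J := by rw [invSet_eq_invF, hwinv]
  have hIeq : I = idealOf R ℓ w := by
    ext γ
    constructor
    · intro hγI
      refine ⟨hIsub hγI, ?_⟩
      rw [hinvSet]
      intro hγJ
      exact (mem_J.1 hγJ).2.2 hγI
    · rintro ⟨hγg, hγn⟩
      by_contra hγI
      refine hγn ?_
      rw [hinvSet]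
      exact_mod_cast mem_J.2 ⟨gradeOne_pos R ℓ hsimp hγg, hγg.2, hγI⟩
  refine ⟨w, ⟨hwmin, hIeq⟩, ?_⟩
  rintro w' ⟨⟨hw'W, hw'min⟩, hI'⟩
  have hw'nice := weyl_nice R hw'W
  have hinv' : invF R w' = J := by
    ext γ
    constructor
    · intro hγ
      obtain ⟨hγp, hγneg⟩ := mem_invF.1 hγ
      have hγ1 : ℓ γ = 1 := by
        rcases ell_pos_01 R ℓ hab hsimp hγp with h0 | h1
        · exfalso
          exact R.pos_neg_disjoint _ (hw'min γ hγp h0) hγneg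
        · exact h1
      refine mem_J.2 ⟨hγp, hγ1, fun hγI => ?_⟩
      rw [hI'] at hγI
      exact hγI.2 ⟨hγp, hγneg⟩
    · intro hγ
      obtain ⟨hγp, hγ1, hγI⟩ := mem_J.1 hγ
      have hγg : γ ∈ gradeOne R ℓ := ⟨R.pos_subset hγp, hγ1⟩
      by_contra hninv
      refine hγI ?_
      rw [hI']
      refine ⟨hγg, fun hmem => hninv (mem_invF.2 ⟨hmem.1, hmem.2⟩)⟩
  exact weyl_eq_of_invF_eq R (invF R w').card w' hw'W w hwW rfl (by rw [hinv', hwinv])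


/-- Abelian `ℤ`-grading: for the grading of a simple Lie algebra defined by `ℓ` (with
`ℓ(γ) ∈ {−1,0,1}` on roots and `ℓ ≥ 0` on simple roots), for every `w ∈ W⁰` the set
`I_w = Δ(1) \ N(w)` is an upper ideal of the weight poset `Δ(1)` (ordered by adding
nonnegative combinations of simple roots in `Π(0)`), and `w ↦ I_w` is a bijection between
`W⁰` and the set of upper ideals of `Δ(1)`. -/
theorem abelian_ideals_bijection (R : RootSystemData V) (ℓ : V →ₗ[ℝ] ℝ)
    (hab : ∀ γ ∈ R.roots, ℓ γ = -1 ∨ ℓ γ = 0 ∨ ℓ γ = 1)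
    (hsimp : ∀ α ∈ R.simples, 0 ≤ ℓ α) :
    (∀ w ∈ minLengthReps R ℓ, ∀ μ ∈ idealOf R ℓ w, ∀ γ ∈ gradeOne R ℓ,
        rootLEon R.simples {α | ℓ α = 0} μ γ → γ ∈ idealOf R ℓ w) ∧
    (∀ I : Set V, I ⊆ gradeOne R ℓ →
        (∀ μ ∈ I, ∀ γ ∈ gradeOne R ℓ, rootLEon R.simples {α | ℓ α = 0} μ γ → γ ∈ I) →
        ∃! w, w ∈ minLengthReps R ℓ ∧ I = idealOf R ℓ w) :=
  ⟨part_one R ℓ hab hsimp, part_two R ℓ hab hsimp⟩
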